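/- Let ε ∈ [0,1), let 𝓟 and 𝓔 be sets of density matrices on ℂ^d such that conv(𝓟) ∩ aff(𝓔) ≠ ∅, and let ρ′ and τ′ be density matrices on ℂ^{d′}. Then there exists a linear map L from d×d complex matrices to d′×d′ complex matrices satisfying T(L(ρ), ρ′) ≤ ε for all ρ ∈ 𝓟 and L(τ) = τ′ for all τ ∈ 𝓔, if and only if ε ≥ T(ρ′, τ′). -/

import Mathlib

open Matrix ComplexOrder

/-- Trace norm of a complex matrix: the trace of `sqrt(AᴴA)` (sum of singular values). -/
noncomputable def traceNorm {n : Type*} [Fintype n] [DecidableEq n]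
    (A : Matrix n n ℂ) : ℝ :=
  (((Matrix.posSemidef_conjTranspose_mul_self A).1.eigenvectorUnitary : Matrix n n ℂ) *
      Matrix.diagonal ((fun x : ℝ => ((√x : ℝ) : ℂ)) ∘
        (Matrix.posSemidef_conjTranspose_mul_self A).1.eigenvalues) *
      (star ((Matrix.posSemidef_conjTranspose_mul_self A).1.eigenvectorUnitary :
        Matrix n n ℂ))).trace.re

/-- Trace distance `T(X,Y) = ‖X - Y‖₁ / 2`. -/
noncomputable def traceDist {n : Type*} [Fintype n] [DecidableEq n]
    (X Y : Matrix n n ℂ) : ℝ :=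
  traceNorm (X - Y) / 2

/-- A density matrix: positive semidefinite with unit trace. -/
def IsDensityMatrix {n : Type*} [Fintype n] (ρ : Matrix n n ℂ) : Prop :=
  ρ.PosSemidef ∧ ρ.trace = 1

/-- The battery Gibbs state `π_M = diag(1 - 1/M, 1/M)`. -/
noncomputable def piM (M : ℝ) : Matrix (Fin 2) (Fin 2) ℂ :=
  Matrix.diagonal ![((1 - 1/M : ℝ) : ℂ), ((1/M : ℝ) : ℂ)]

/-- The excited battery state `|1⟩⟨1| = diag(0,1)`. -/
def ket1 : Matrix (Fin 2) (Fin 2) ℂ :=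
  Matrix.diagonal ![0, 1]

/-- A test (POVM effect): `0 ≤ E ≤ I`. -/
def IsTest {n : Type*} [Fintype n] [DecidableEq n] (E : Matrix n n ℂ) : Prop :=
  E.PosSemidef ∧ (1 - E).PosSemidef

/-- Choi matrix `Σ_{ij} E_{ij} ⊗ F(E_{ij})` of a linear map on matrices. -/
noncomputable def choiMatrix {n m : Type*} [Fintype n] [DecidableEq n] [Fintype m]
    (F : Matrix n n ℂ →ₗ[ℂ] Matrix m m ℂ) :
    Matrix (n × m) (n × m) ℂ :=
  fun p q => F (Matrix.single p.1 q.1 1) p.2 q.2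

/-- Completely positive (positive semidefinite Choi matrix) and trace preserving. -/
def IsCPTP {n m : Type*} [Fintype n] [DecidableEq n] [Fintype m]
    (F : Matrix n n ℂ →ₗ[ℂ] Matrix m m ℂ) : Prop :=
  (choiMatrix F).PosSemidef ∧ ∀ X, (F X).trace = X.trace

/-- `n`-fold Kronecker (tensor) power of a `2 × 2` matrix, indexed by bit strings. -/
def tensPow (A : Matrix (Fin 2) (Fin 2) ℂ) (n : ℕ) :
    Matrix (Fin n → Fin 2) (Fin n → Fin 2) ℂ :=
  fun x y => ∏ i, A (x i) (y i)

/-- `ε`-ball (in trace distance) of density matrices around a set `𝓟`. -/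
noncomputable def metBall {n : Type*} [Fintype n] [DecidableEq n]
    (ε : ℝ) (P : Set (Matrix n n ℂ)) : Set (Matrix n n ℂ) :=
  {ω | IsDensityMatrix ω ∧ ∃ ρ ∈ P, traceDist ω ρ ≤ ε}

namespace TN
variable {n : Type*} [Fintype n] [DecidableEq n]

lemma contraction_dot (M : Matrix n n ℂ) (hM : (1 - M * Mᴴ).PosSemidef) (x : n → ℂ) :
    (star (Mᴴ *ᵥ x) ⬝ᵥ (Mᴴ *ᵥ x)).re ≤ (star x ⬝ᵥ x).re := by
  have h := hM.dotProduct_mulVec_nonneg x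
  have he : star x ⬝ᵥ ((1 - M * Mᴴ) *ᵥ x)
      = star x ⬝ᵥ x - star (Mᴴ *ᵥ x) ⬝ᵥ (Mᴴ *ᵥ x) := by
    rw [sub_mulVec, one_mulVec, dotProduct_sub]
    congr 1
    rw [star_mulVec, conjTranspose_conjTranspose, ← mulVec_mulVec, dotProduct_mulVec]
  rw [he] at h
  have h2 := (Complex.le_def.mp h).1
  simp only [Complex.zero_re, Complex.sub_re] at h2
  linarith

end TN

namespace TN
variable {n : Type*} [Fintype n] [DecidableEq n]

noncomputable def v (C : Matrix n n ℂ) (i : n) : n → ℂ :=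
  ⇑((Matrix.posSemidef_conjTranspose_mul_self C).1.eigenvectorBasis i)

noncomputable def lam (C : Matrix n n ℂ) (i : n) : ℝ :=
  (Matrix.posSemidef_conjTranspose_mul_self C).1.eigenvalues i

lemma lam_nonneg (C : Matrix n n ℂ) (i : n) : 0 ≤ lam C i :=
  (Matrix.posSemidef_conjTranspose_mul_self C).eigenvalues_nonneg i

lemma orth (C : Matrix n n ℂ) (i j : n) :
    star (v C i) ⬝ᵥ (v C j) = if i = j then 1 else 0 := by
  have h := orthonormal_iff_ite.mp
    ((Matrix.posSemidef_conjTranspose_mul_self C).1.eigenvectorBasis.orthonormal) i j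
  rw [EuclideanSpace.inner_eq_star_dotProduct, dotProduct_comm] at h
  exact h

lemma CC_mulVec (C : Matrix n n ℂ) (i : n) :
    (Cᴴ * C) *ᵥ v C i = lam C i • v C i :=
  (Matrix.posSemidef_conjTranspose_mul_self C).1.mulVec_eigenvectorBasis i

lemma dot_C (C : Matrix n n ℂ) (i : n) :
    star (C *ᵥ v C i) ⬝ᵥ (C *ᵥ v C i) = ((lam C i : ℝ) : ℂ) := by
  rw [star_mulVec, dotProduct_mulVec, vecMul_vecMul, ← dotProduct_mulVec, CC_mulVec]
  have h := orth C i i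
  simp only [if_pos rfl] at h
  rw [dotProduct_smul, h]
  simp

lemma trace_eq_sum (X C : Matrix n n ℂ) :
    X.trace = ∑ i, star (v C i) ⬝ᵥ (X *ᵥ v C i) := by
  set V := ((Matrix.posSemidef_conjTranspose_mul_self C).1.eigenvectorUnitary : Matrix n n ℂ)
    with hV
  have h2 : V * star V = 1 :=
    ((Matrix.posSemidef_conjTranspose_mul_self C).1.eigenvectorUnitary).2.2
  have h1 : X.trace = (star V * X * V).trace := by
    rw [Matrix.trace_mul_cycle, h2, one_mul]
  rw [h1]
  simp only [Matrix.trace, Matrix.diag, Matrix.mul_apply, Matrix.mulVec, dotProduct,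
    Matrix.star_apply, Pi.star_apply, hV, Matrix.IsHermitian.eigenvectorUnitary_apply, v]
  refine Finset.sum_congr rfl fun i _ => ?_
  simp only [Finset.sum_mul, Finset.mul_sum]
  rw [Finset.sum_comm]
  refine Finset.sum_congr rfl fun k _ => ?_
  refine Finset.sum_congr rfl fun j _ => ?_
  ring

lemma re_dot_le (a b : n → ℂ) :
    (star a ⬝ᵥ b).re ≤ Real.sqrt (star a ⬝ᵥ a).re * Real.sqrt (star b ⬝ᵥ b).re := by
  let a' : EuclideanSpace ℂ n := (WithLp.equiv 2 _).symm a
  let b' : EuclideanSpace ℂ n := (WithLp.equiv 2 _).symm b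
  have h1 : ∀ x y : n → ℂ, (inner ℂ ((WithLp.equiv 2 (n → ℂ)).symm x)
      ((WithLp.equiv 2 (n → ℂ)).symm y) : ℂ) = star x ⬝ᵥ y := fun x y => by
    rw [EuclideanSpace.inner_eq_star_dotProduct, dotProduct_comm]; rfl
  have h2 := norm_inner_le_norm (𝕜 := ℂ) a' b'
  have h3 : (inner ℂ a' b').re ≤ ‖(inner ℂ a' b')‖ := Complex.re_le_norm _
  have h4 : ‖a'‖ = Real.sqrt (star a ⬝ᵥ a).re := by
    rw [@norm_eq_sqrt_re_inner ℂ, h1]; rfl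
  have h5 : ‖b'‖ = Real.sqrt (star b ⬝ᵥ b).re := by
    rw [@norm_eq_sqrt_re_inner ℂ, h1]; rfl
  calc (star a ⬝ᵥ b).re = (inner ℂ a' b').re := by rw [h1]
    _ ≤ ‖(inner ℂ a' b')‖ := h3
    _ ≤ ‖a'‖ * ‖b'‖ := h2
    _ = _ := by rw [h4, h5]

lemma trace_unitary_conj (U : Matrix.unitaryGroup n ℂ) (f : n → ℂ) :
    ((U : Matrix n n ℂ) * diagonal f * star (U : Matrix n n ℂ)).trace = ∑ i, f i := by
  rw [Matrix.trace_mul_cycle, Matrix.UnitaryGroup.star_mul_self, one_mul,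
    Matrix.trace_diagonal]

lemma traceNorm_eq_sum (C : Matrix n n ℂ) :
    traceNorm C = ∑ i, Real.sqrt (lam C i) := by
  unfold traceNorm
  rw [trace_unitary_conj]
  rw [Complex.re_sum]
  rfl

/-- Main inequality: `Re tr(M C) ≤ ‖C‖₁` for a contraction `M`. -/
lemma re_trace_mul_le (M C : Matrix n n ℂ) (hM : (1 - M * Mᴴ).PosSemidef) :
    ((M * C).trace).re ≤ traceNorm C := by
  rw [trace_eq_sum (M * C) C, traceNorm_eq_sum, Complex.re_sum]
  refine Finset.sum_le_sum fun i _ => ?_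
  have h1 : star (v C i) ⬝ᵥ ((M * C) *ᵥ v C i) = star (Mᴴ *ᵥ v C i) ⬝ᵥ (C *ᵥ v C i) := by
    rw [← mulVec_mulVec, dotProduct_mulVec, star_mulVec, conjTranspose_conjTranspose]
  rw [h1]
  have h2 := re_dot_le (Mᴴ *ᵥ v C i) (C *ᵥ v C i)
  have h3 : (star (Mᴴ *ᵥ v C i) ⬝ᵥ (Mᴴ *ᵥ v C i)).re ≤ 1 := by
    have := contraction_dot M hM (v C i)
    have horth := orth C i i
    simp only [if_pos rfl] at horth
    rw [horth] at this
    simpa using this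
  have h4 : (star (C *ᵥ v C i) ⬝ᵥ (C *ᵥ v C i)).re = lam C i := by
    rw [dot_C]; simp
  calc (star (Mᴴ *ᵥ v C i) ⬝ᵥ (C *ᵥ v C i)).re
      ≤ Real.sqrt (star (Mᴴ *ᵥ v C i) ⬝ᵥ (Mᴴ *ᵥ v C i)).re
        * Real.sqrt (star (C *ᵥ v C i) ⬝ᵥ (C *ᵥ v C i)).re := h2
    _ ≤ 1 * Real.sqrt (lam C i) := by
        rw [h4]
        gcongr
        calc Real.sqrt (star (Mᴴ *ᵥ v C i) ⬝ᵥ (Mᴴ *ᵥ v C i)).re ≤ Real.sqrt 1 :=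
              Real.sqrt_le_sqrt h3
          _ = 1 := Real.sqrt_one
    _ = Real.sqrt (lam C i) := one_mul _

end TN

namespace TN2
open TN
variable {n : Type*} [Fintype n] [DecidableEq n]

set_option maxHeartbeats 800000 in
lemma exists_dual (C : Matrix n n ℂ) (lam : n → ℝ) (hlam0 : ∀ i, 0 ≤ lam i)
    (V Λ : Matrix n n ℂ) (hΛ : Λ = diagonal (fun i => (lam i : ℂ)))
    (hVV1 : Vᴴ * V = 1) (hVV2 : V * Vᴴ = 1) (hspec : Cᴴ * C = V * Λ * Vᴴ) :
    ∃ M : Matrix n n ℂ, (1 - M * Mᴴ).PosSemidef ∧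
      (M * C).trace = ((∑ i, Real.sqrt (lam i) : ℝ) : ℂ) := by
  classical
  set c : n → ℝ := fun i => if lam i = 0 then 0 else (Real.sqrt (lam i))⁻¹ with hc
  set D : Matrix n n ℂ := diagonal (fun i => (c i : ℂ)) with hD
  have hDH : Dᴴ = D := by
    rw [hD, diagonal_conjTranspose,
      show (star fun i => ((c i : ℂ))) = fun i => ((c i : ℂ)) from
        funext fun i => Complex.conj_ofReal _]
  have hconj : ∀ A B : Matrix n n ℂ, (V * A * Vᴴ) * (V * B * Vᴴ) = V * (A * B) * Vᴴ := by
    intro A B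
    rw [show (V * A * Vᴴ) * (V * B * Vᴴ) = V * A * (Vᴴ * V) * B * Vᴴ by noncomm_ring, hVV1]
    noncomm_ring
  refine ⟨V * D * Vᴴ * Cᴴ, ?_, ?_⟩
  · have hMH : (V * D * Vᴴ * Cᴴ)ᴴ = C * (V * D * Vᴴ) := by
      simp only [conjTranspose_mul, conjTranspose_conjTranspose, hDH]
      noncomm_ring
    have hMM : (V * D * Vᴴ * Cᴴ) * (V * D * Vᴴ * Cᴴ)ᴴ = V * (D * Λ * D) * Vᴴ := by
      rw [hMH, show (V * D * Vᴴ * Cᴴ) * (C * (V * D * Vᴴ))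
          = (V * D * Vᴴ) * (Cᴴ * C) * (V * D * Vᴴ) by noncomm_ring, hspec,
        show (V * D * Vᴴ) * (V * Λ * Vᴴ) * (V * D * Vᴴ)
          = ((V * D * Vᴴ) * (V * Λ * Vᴴ)) * (V * D * Vᴴ) by noncomm_ring,
        hconj, hconj]
    rw [hMM, show (1 : Matrix n n ℂ) - V * (D * Λ * D) * Vᴴ
        = V * (1 - D * Λ * D) * Vᴴ by rw [Matrix.mul_sub, Matrix.sub_mul, mul_one, hVV2]]
    have hdiag : (1 : Matrix n n ℂ) - D * Λ * D
        = diagonal (fun i => ((1 - c i * lam i * c i : ℝ) : ℂ)) := by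
      rw [hD, hΛ, diagonal_mul_diagonal, diagonal_mul_diagonal, ← diagonal_one,
        diagonal_sub]
      congr 1
      funext i
      push_cast
      ring
    apply Matrix.PosSemidef.mul_mul_conjTranspose_same
    rw [hdiag]
    rw [posSemidef_diagonal_iff]
    intro i
    rw [Complex.zero_le_real]
    by_cases h : lam i = 0
    · simp [hc, h]
    · have hpos : 0 < lam i := lt_of_le_of_ne (hlam0 i) (Ne.symm h)
      have hs : Real.sqrt (lam i) ≠ 0 := by
        rw [Real.sqrt_ne_zero']; exact hpos
      have : c i * lam i * c i = 1 := by
        rw [hc]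
        simp only [if_neg h]
        rw [← Real.mul_self_sqrt (hlam0 i)]  -- maybe wrong name
        field_simp
        rw [Real.sqrt_sq (Real.sqrt_nonneg _)]
      rw [this]; norm_num
  · rw [show (V * D * Vᴴ * Cᴴ) * C = (V * D * Vᴴ) * (Cᴴ * C) by noncomm_ring, hspec, hconj,
      Matrix.trace_mul_cycle, hVV1, one_mul, hD, hΛ, diagonal_mul_diagonal, trace_diagonal]
    push_cast
    refine Finset.sum_congr rfl fun i _ => ?_
    by_cases h : lam i = 0
    · simp [hc, h]
    · have hpos : 0 < lam i := lt_of_le_of_ne (hlam0 i) (Ne.symm h)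
      have hs : Real.sqrt (lam i) ≠ 0 := by
        rw [Real.sqrt_ne_zero']; exact hpos
      have : c i * lam i = Real.sqrt (lam i) := by
        rw [hc]
        simp only [if_neg h]
        rw [← Real.mul_self_sqrt (hlam0 i)]
        field_simp
        rw [Real.sqrt_sq (Real.sqrt_nonneg _)]
      rw [show ((c i : ℂ)) * ((lam i : ℂ)) = ((c i * lam i : ℝ) : ℂ) by push_cast; ring, this]
end TN2
namespace TN
variable {n : Type*} [Fintype n] [DecidableEq n]

lemma sqrt_congr {A B : Matrix n n ℂ} (hA : A.PosSemidef) (hB : B.PosSemidef) (h : A = B) :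
    ((hA.1.eigenvectorUnitary : Matrix n n ℂ) *
      diagonal ((fun x : ℝ => ((√x : ℝ) : ℂ)) ∘ hA.1.eigenvalues) *
      star (hA.1.eigenvectorUnitary : Matrix n n ℂ)) =
    ((hB.1.eigenvectorUnitary : Matrix n n ℂ) *
      diagonal ((fun x : ℝ => ((√x : ℝ) : ℂ)) ∘ hB.1.eigenvalues) *
      star (hB.1.eigenvectorUnitary : Matrix n n ℂ)) := by subst h; rfl

lemma traceNorm_neg (A : Matrix n n ℂ) : traceNorm (-A) = traceNorm A := by
  unfold traceNorm
  rw [sqrt_congr (Matrix.posSemidef_conjTranspose_mul_self (-A))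
    (Matrix.posSemidef_conjTranspose_mul_self A) (by simp)]

lemma traceDist_comm (X Y : Matrix n n ℂ) : traceDist X Y = traceDist Y X := by
  unfold traceDist
  rw [← neg_sub, traceNorm_neg]

/-- Duality: there is a contraction `M` with `tr (M C) = ‖C‖₁`. -/
lemma exists_dual' (C : Matrix n n ℂ) :
    ∃ M : Matrix n n ℂ, (1 - M * Mᴴ).PosSemidef ∧
      (M * C).trace = ((traceNorm C : ℝ) : ℂ) := by
  have hH := (Matrix.posSemidef_conjTranspose_mul_self C).1
  have hspec := hH.spectral_theorem
  obtain ⟨M, h1, h2⟩ := TN2.exists_dual C (lam C) (lam_nonneg C)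
    (hH.eigenvectorUnitary : Matrix n n ℂ)
    (Matrix.diagonal (RCLike.ofReal ∘ hH.eigenvalues)) rfl
    (by have h := Matrix.UnitaryGroup.star_mul_self hH.eigenvectorUnitary
        rwa [Matrix.star_eq_conjTranspose] at h)
    (by have h := hH.eigenvectorUnitary.2.2
        rwa [Matrix.star_eq_conjTranspose] at h)
    (by rwa [Unitary.conjStarAlgAut_apply, Matrix.star_eq_conjTranspose] at hspec)
  exact ⟨M, h1, by rw [h2, traceNorm_eq_sum]⟩

end TN

/-- No-go theorem for athermality "purification" under
Gibbs-preserving linear maps, for an uncertain athermal state `(𝓟, 𝓔)` with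
`conv(𝓟) ∩ aff(𝓔) ≠ ∅`. -/

theorem stmt_0 {d d' : ℕ} (ε : ℝ) (hε : ε ∈ Set.Ico (0:ℝ) 1)
    (𝓟 𝓔 : Set (Matrix (Fin d) (Fin d) ℂ))
    (h𝓟 : ∀ ρ ∈ 𝓟, IsDensityMatrix ρ) (h𝓔 : ∀ τ ∈ 𝓔, IsDensityMatrix τ)
    (hgeo : (convexHull ℝ 𝓟 ∩
      (affineSpan ℝ 𝓔 : Set (Matrix (Fin d) (Fin d) ℂ))).Nonempty)
    (ρ' τ' : Matrix (Fin d') (Fin d') ℂ)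
    (hρ' : IsDensityMatrix ρ') (hτ' : IsDensityMatrix τ') :
    (∃ L : Matrix (Fin d) (Fin d) ℂ →ₗ[ℂ] Matrix (Fin d') (Fin d') ℂ,
        (∀ ρ ∈ 𝓟, traceDist (L ρ) ρ' ≤ ε) ∧ (∀ τ ∈ 𝓔, L τ = τ')) ↔
      ε ≥ traceDist ρ' τ' := by
  constructor
  · rintro ⟨L, hLP, hLE⟩
    obtain ⟨σ, hσP, hσE⟩ := hgeo
    -- `L σ = τ'` because `σ` is in the affine span of `𝓔`
    have hLσ : L σ = τ' := by
      rw [coe_affineSpan] at hσE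
      obtain ⟨p1, hp1, w, hw, rfl⟩ := hσE
      have hw0 : L w = 0 := by
        rw [vectorSpan_def] at hw
        refine Submodule.span_induction (p := fun y _ => L y = 0) ?_ (map_zero L)
          (fun x y _ _ hx hy => by show L (x + y) = 0; rw [map_add, hx, hy, add_zero])
          (fun r x _ hx => by show L (r • x) = 0; rw [LinearMap.map_smul_of_tower, hx, smul_zero]) hw
        rintro x ⟨a, ha, b, hb, rfl⟩
        show L (a - b) = 0
        rw [map_sub, hLE a ha, hLE b hb, sub_self]
      rw [vadd_eq_add, map_add, hw0, zero_add, hLE p1 hp1]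
    -- `σ` is a convex combination of elements of `𝓟`
    rw [convexHull_eq] at hσP
    obtain ⟨ι, t, wgt, z, hw0, hw1, hz, hcm⟩ := hσP
    have hσ : σ = ∑ i ∈ t, wgt i • z i := by
      rw [← hcm, Finset.centerMass_eq_of_sum_1 _ _ hw1]
    have hLσ2 : L σ - ρ' = ∑ i ∈ t, wgt i • (L (z i) - ρ') := by
      have : L σ = ∑ i ∈ t, wgt i • L (z i) := by
        rw [hσ, map_sum]
        exact Finset.sum_congr rfl fun i _ => LinearMap.map_smul_of_tower L _ _
      rw [this]
      rw [Finset.sum_congr rfl (fun i _ => smul_sub (wgt i) (L (z i)) ρ'),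
        Finset.sum_sub_distrib, ← Finset.sum_smul, hw1, one_smul]
    obtain ⟨M, hM, htr⟩ := TN.exists_dual' (L σ - ρ')
    have hkey : traceNorm (L σ - ρ') ≤ 2 * ε := by
      have hre : traceNorm (L σ - ρ') = ((M * (L σ - ρ')).trace).re := by
        rw [htr, Complex.ofReal_re]
      have hexp : M * (L σ - ρ') = ∑ i ∈ t, wgt i • (M * (L (z i) - ρ')) := by
        rw [hLσ2, Finset.mul_sum]
        exact Finset.sum_congr rfl fun i _ => mul_smul_comm _ _ _
      rw [hre, hexp, Matrix.trace_sum]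
      have : ∀ i ∈ t, ((wgt i • (M * (L (z i) - ρ'))).trace).re
          ≤ wgt i * (2 * ε) := by
        intro i hi
        rw [Matrix.trace_smul, Complex.smul_re]
        have hA := TN.re_trace_mul_le M (L (z i) - ρ') hM
        have hTd : traceNorm (L (z i) - ρ') ≤ 2 * ε := by
          have := hLP (z i) (hz i hi)
          unfold traceDist at this
          linarith
        have := le_trans hA hTd
        have hwi := hw0 i hi
        calc wgt i • ((M * (L (z i) - ρ')).trace).re
            = wgt i * ((M * (L (z i) - ρ')).trace).re := rfl
          _ ≤ wgt i * (2 * ε) := by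
              apply mul_le_mul_of_nonneg_left _ hwi
              exact le_trans hA hTd
      calc (∑ i ∈ t, ((wgt i • (M * (L (z i) - ρ'))).trace)).re
          = ∑ i ∈ t, ((wgt i • (M * (L (z i) - ρ'))).trace).re := Complex.re_sum _ _
        _ ≤ ∑ i ∈ t, wgt i * (2 * ε) := Finset.sum_le_sum this
        _ = (∑ i ∈ t, wgt i) * (2 * ε) := by rw [Finset.sum_mul]
        _ = 2 * ε := by rw [hw1, one_mul]
    have : traceDist ρ' τ' ≤ ε := by
      rw [TN.traceDist_comm]
      unfold traceDist
      rw [← hLσ]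
      linarith
    exact this
  · intro h
    refine ⟨(Matrix.traceLinearMap (Fin d) ℂ ℂ).smulRight τ', ?_, ?_⟩
    · intro ρ hρ
      have : (ρ.trace) • τ' = τ' := by rw [(h𝓟 ρ hρ).2, one_smul]
      simp only [LinearMap.smulRight_apply, Matrix.traceLinearMap_apply, this]
      rw [TN.traceDist_comm]
      exact h
    · intro τ hτ
      have : (τ.trace) • τ' = τ' := by rw [(h𝓔 τ hτ).2, one_smul]
      simp only [LinearMap.smulRight_apply, Matrix.traceLinearMap_apply, this]
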